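/- In the free product ℤ/2 ∗ (ℤ/2 × ℤ/2) = ⟨a, b, c ∣ a² = b² = c² = 1, bc = cb⟩, the subgroup generated by the elements abab and acac is a free group of rank 2. -/

import Mathlib

open Monoid

/-- The free product `ℤ/2 ∗ (ℤ/2 × ℤ/2)`. -/
abbrev D : Type :=
  Coprod (Multiplicative (ZMod 2)) (Multiplicative (ZMod 2) × Multiplicative (ZMod 2))

/-- The generator `a` of the first factor. -/
def genA : D := Coprod.inl (Multiplicative.ofAdd (1 : ZMod 2))

/-- The generator `b` of the second factor. -/
def genB : D := Coprod.inr (Multiplicative.ofAdd (1 : ZMod 2), 1)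

/-- The generator `c` of the second factor. -/
def genC : D := Coprod.inr (1, Multiplicative.ofAdd (1 : ZMod 2))

namespace AbabAux

inductive L : Type
  | a | b | c | d
deriving DecidableEq

open L

def isA : L → Bool
  | .a => true
  | _ => false

def Alt (l : List L) : Prop := l.IsChain fun x y => isA x ≠ isA y

def fa : List L → List L
  | .a :: t => t
  | l => .a :: l

def fb : List L → List L
  | .b :: t => t
  | .c :: t => .d :: t
  | .d :: t => .c :: t
  | l => .b :: l

def fc : List L → List L
  | .c :: t => t
  | .b :: t => .d :: t
  | .d :: t => .b :: t
  | l => .c :: l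

lemma alt_fa {l : List L} (h : Alt l) : Alt (fa l) := by
  rcases l with _ | ⟨x, t⟩
  · simp [fa, Alt]
  · cases x <;> rcases t with _ | ⟨y, r⟩ <;>
      simp_all [fa, Alt, isA, List.isChain_cons_cons]

lemma alt_fb {l : List L} (h : Alt l) : Alt (fb l) := by
  rcases l with _ | ⟨x, t⟩
  · simp [fb, Alt]
  · cases x <;> rcases t with _ | ⟨y, r⟩ <;>
      simp_all [fb, Alt, isA, List.isChain_cons_cons]

lemma alt_fc {l : List L} (h : Alt l) : Alt (fc l) := by
  rcases l with _ | ⟨x, t⟩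
  · simp [fc, Alt]
  · cases x <;> rcases t with _ | ⟨y, r⟩ <;>
      simp_all [fc, Alt, isA, List.isChain_cons_cons]

lemma fa_fa {l : List L} (h : Alt l) : fa (fa l) = l := by
  rcases l with _ | ⟨x, t⟩
  · simp [fa]
  · cases x <;> rcases t with _ | ⟨y, r⟩ <;> try cases y
    all_goals simp_all [fa, Alt, isA, List.isChain_cons_cons]

lemma fb_fb {l : List L} (h : Alt l) : fb (fb l) = l := by
  rcases l with _ | ⟨x, t⟩
  · simp [fb]
  · cases x <;> rcases t with _ | ⟨y, r⟩ <;> try cases y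
    all_goals simp_all [fb, Alt, isA, List.isChain_cons_cons]

lemma fc_fc {l : List L} (h : Alt l) : fc (fc l) = l := by
  rcases l with _ | ⟨x, t⟩
  · simp [fc]
  · cases x <;> rcases t with _ | ⟨y, r⟩ <;> try cases y
    all_goals simp_all [fc, Alt, isA, List.isChain_cons_cons]

lemma fb_fc {l : List L} (h : Alt l) : fb (fc l) = fc (fb l) := by
  rcases l with _ | ⟨x, t⟩
  · simp [fb, fc]
  · cases x <;> rcases t with _ | ⟨y, r⟩ <;> try cases y
    all_goals simp_all [fb, fc, Alt, isA, List.isChain_cons_cons]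

/-- The type of reduced words. -/
def W : Type := {l : List L // Alt l}

def FA : W → W := fun w => ⟨fa w.1, alt_fa w.2⟩
def FB : W → W := fun w => ⟨fb w.1, alt_fb w.2⟩
def FC : W → W := fun w => ⟨fc w.1, alt_fc w.2⟩

lemma FA_inv : Function.Involutive FA := fun w => Subtype.ext (fa_fa w.2)
lemma FB_inv : Function.Involutive FB := fun w => Subtype.ext (fb_fb w.2)
lemma FC_inv : Function.Involutive FC := fun w => Subtype.ext (fc_fc w.2)

def pa : Equiv.Perm W := FA_inv.toPerm FA
def pb : Equiv.Perm W := FB_inv.toPerm FB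
def pc : Equiv.Perm W := FC_inv.toPerm FC

lemma pa_apply (w : W) : pa w = FA w := rfl
lemma pb_apply (w : W) : pb w = FB w := rfl
lemma pc_apply (w : W) : pc w = FC w := rfl

lemma pa_sq : pa * pa = 1 := Equiv.ext fun w => FA_inv w
lemma pb_sq : pb * pb = 1 := Equiv.ext fun w => FB_inv w
lemma pc_sq : pc * pc = 1 := Equiv.ext fun w => FC_inv w

lemma pb_pc_comm : Commute pb pc :=
  Equiv.ext fun w => (Subtype.ext (fb_fc w.2) : FB (FC w) = FC (FB w))

/-- Monoid hom from `Multiplicative (ZMod 2)` determined by an involution. -/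
def homInv {G : Type*} [Group G] (g : G) (hg : g * g = 1) :
    Multiplicative (ZMod 2) →* G where
  toFun x := if Multiplicative.toAdd x = 0 then 1 else g
  map_one' := by simp
  map_mul' x y := by
    have h2 : ∀ z : ZMod 2, z = 0 ∨ z = 1 := by decide
    rcases h2 (Multiplicative.toAdd x) with hx | hx <;>
      rcases h2 (Multiplicative.toAdd y) with hy | hy <;>
      simp [toAdd_mul, hx, hy, hg, show (1 + 1 : ZMod 2) = 0 from rfl,
        show (1 : ZMod 2) ≠ 0 from by decide]

lemma homInv_apply_one' {G : Type*} [Group G] (g : G) (hg : g * g = 1) :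
    homInv g hg (Multiplicative.ofAdd (1 : ZMod 2)) = g := by
  simp [homInv]

/-- The representation of `D` on reduced words. -/
def ψ : D →* Equiv.Perm W :=
  Coprod.lift (homInv pa pa_sq)
    ((homInv pb pb_sq).noncommCoprod (homInv pc pc_sq) (by
      intro m n
      have h2 : ∀ z : Multiplicative (ZMod 2), z = 1 ∨ z = Multiplicative.ofAdd 1 := by
        decide
      rcases h2 m with rfl | rfl <;> rcases h2 n with rfl | rfl
      · rw [MonoidHom.map_one]; exact Commute.one_left _
      · rw [MonoidHom.map_one]; exact Commute.one_left _
      · rw [MonoidHom.map_one]; exact Commute.one_right _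
      · rw [homInv_apply_one', homInv_apply_one']; exact pb_pc_comm))

lemma ψ_genA : ψ genA = pa := by
  rw [genA, ψ, Coprod.lift_apply_inl, homInv_apply_one']

lemma ψ_genB : ψ genB = pb := by
  rw [genB, ψ, Coprod.lift_apply_inr, MonoidHom.noncommCoprod_apply]
  rw [homInv_apply_one', map_one, mul_one]

lemma ψ_genC : ψ genC = pc := by
  rw [genC, ψ, Coprod.lift_apply_inr, MonoidHom.noncommCoprod_apply]
  rw [homInv_apply_one', map_one, one_mul]

/-- The ping-pong sets. -/
def X : Bool → Set W := fun t =>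
  {w | w.1.take 2 = if t then [L.a, L.b] else [L.a, L.c]}

def Y : Bool → Set W := fun t =>
  {w | w.1.take 2 = if t then [L.b, L.a] else [L.c, L.a]}

lemma key_b {l : List L} (h : Alt l) (h2 : l.take 2 ≠ [L.b, L.a]) :
    (fa (fb (fa (fb l)))).take 2 = [L.a, L.b] := by
  rcases l with _ | ⟨x, t⟩
  · simp [fa, fb]
  · cases x <;> rcases t with _ | ⟨y, r⟩ <;> try cases y
    all_goals simp_all [fa, fb, Alt, isA, List.isChain_cons_cons]

lemma key_b_inv {l : List L} (h : Alt l) (h2 : l.take 2 ≠ [L.a, L.b]) :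
    (fb (fa (fb (fa l)))).take 2 = [L.b, L.a] := by
  rcases l with _ | ⟨x, t⟩
  · simp [fa, fb]
  · cases x <;> rcases t with _ | ⟨y, r⟩ <;> try cases y
    all_goals simp_all [fa, fb, Alt, isA, List.isChain_cons_cons]

lemma key_c {l : List L} (h : Alt l) (h2 : l.take 2 ≠ [L.c, L.a]) :
    (fa (fc (fa (fc l)))).take 2 = [L.a, L.c] := by
  rcases l with _ | ⟨x, t⟩
  · simp [fa, fc]
  · cases x <;> rcases t with _ | ⟨y, r⟩ <;> try cases y
    all_goals simp_all [fa, fc, Alt, isA, List.isChain_cons_cons]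

lemma key_c_inv {l : List L} (h : Alt l) (h2 : l.take 2 ≠ [L.a, L.c]) :
    (fc (fa (fc (fa l)))).take 2 = [L.c, L.a] := by
  rcases l with _ | ⟨x, t⟩
  · simp [fa, fc]
  · cases x <;> rcases t with _ | ⟨y, r⟩ <;> try cases y
    all_goals simp_all [fa, fc, Alt, isA, List.isChain_cons_cons]

end AbabAux

open AbabAux

/-- In `ℤ/2 ∗ (ℤ/2 × ℤ/2) = ⟨a, b, c ∣ a² = b² = c² = 1, bc = cb⟩`, the subgroup
generated by `abab` and `acac` is free of rank 2: the homomorphism from the free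
group on two generators sending them to `abab` and `acac` is injective, and its
range is the subgroup generated by these two elements. -/
theorem abab_acac_free :
    Function.Injective (FreeGroup.lift fun t : Bool =>
      if t then genA * genB * genA * genB else genA * genC * genA * genC) ∧
    (FreeGroup.lift fun t : Bool =>
      if t then genA * genB * genA * genB else genA * genC * genA * genC).range =
      Subgroup.closure {genA * genB * genA * genB, genA * genC * genA * genC} := by
  constructor
  · -- injectivity via ping-pong
    have hai : pa⁻¹ = pa := inv_eq_of_mul_eq_one_right pa_sq
    have hbi : pb⁻¹ = pb := inv_eq_of_mul_eq_one_right pb_sq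
    have hci : pc⁻¹ = pc := inv_eq_of_mul_eq_one_right pc_sq
    have key : Function.Injective (FreeGroup.lift fun t : Bool =>
        if t then pa * pb * pa * pb else pa * pc * pa * pc) := by
      apply FreeGroup.injective_lift_of_ping_pong _ X Y
      · intro i
        cases i
        · exact ⟨⟨[L.a, L.c], by simp [Alt, isA]⟩, by simp [X]; exact rfl⟩
        · exact ⟨⟨[L.a, L.b], by simp [Alt, isA]⟩, by simp [X]; exact rfl⟩
      · intro i j hij
        apply Set.disjoint_left.mpr
        intro w hw hw'
        cases i <;> cases j <;> simp_all [X]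
      · intro i j hij
        apply Set.disjoint_left.mpr
        intro w hw hw'
        cases i <;> cases j <;> simp_all [Y]
      · intro i j
        apply Set.disjoint_left.mpr
        intro w hw hw'
        cases i <;> cases j <;> simp_all [X, Y]
      · -- hX
        intro i
        cases i
        · rintro _ ⟨w, hw, rfl⟩
          exact key_c w.2 (by simpa [Y] using hw)
        · rintro _ ⟨w, hw, rfl⟩
          exact key_b w.2 (by simpa [Y] using hw)
      · -- hY
        intro i
        cases i
        · rintro _ ⟨w, hw, rfl⟩
          exact key_c_inv w.2 (by simpa [X] using hw)
        · rintro _ ⟨w, hw, rfl⟩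
          exact key_b_inv w.2 (by simpa [X] using hw)
    have hfun : (fun t : Bool => if t then pa * pb * pa * pb else pa * pc * pa * pc)
        = fun t : Bool => ψ (if t then genA * genB * genA * genB
            else genA * genC * genA * genC) := by
      funext t
      cases t <;> simp [map_mul, ψ_genA, ψ_genB, ψ_genC]
    rw [hfun] at key
    intro x y hxy
    apply key
    have : ∀ z, (FreeGroup.lift fun t : Bool => ψ (if t then genA * genB * genA * genB
        else genA * genC * genA * genC)) z
        = ψ ((FreeGroup.lift fun t : Bool => if t then genA * genB * genA * genB
            else genA * genC * genA * genC) z) := by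
      intro z
      have : (FreeGroup.lift fun t : Bool => ψ (if t then genA * genB * genA * genB
          else genA * genC * genA * genC))
          = ψ.comp (FreeGroup.lift fun t : Bool => if t then genA * genB * genA * genB
            else genA * genC * genA * genC) := by
        ext t
        simp
      rw [this]
      rfl
    rw [this, this, hxy]
  · -- range
    rw [FreeGroup.range_lift_eq_closure]
    congr 1
    ext z
    constructor
    · rintro ⟨t, rfl⟩
      cases t
      · right; rfl
      · left; rfl
    · rintro (rfl | rfl)
      · exact ⟨true, rfl⟩
      · exact ⟨false, rfl⟩
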